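/- arXiv:2503.23122 — 3 statements merged into one kernel-verified Lean document; each statement's English description precedes it below -/
import Mathlib

section
/- For every n ≥ 1 and every n-Dyck path D, the product c_D = Π_{N∈D} c_N over the north steps N of D equals 1/(n+1). -/
open scoped RealInnerProductSpace
open MeasureTheory

attribute [local instance 0] Classical.propDecidable

noncomputable section

noncomputable def eVol (k : ℕ) {V : Type*} [NormedAddCommGroup V] [InnerProductSpace ℝ V]
    (A : Set V) : ℝ :=
  if h : ∃ f : EuclideanSpace ℝ (Fin k) →ᵃⁱ[ℝ] V, A ⊆ Set.range ⇑f then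
    (volume (⇑h.choose ⁻¹' A)).toReal
  else 0

noncomputable def alphaRoot (n i : ℕ) : EuclideanSpace ℝ (Fin (n+1)) :=
  if h : 1 ≤ i ∧ i ≤ n then
    EuclideanSpace.single (⟨i - 1, by omega⟩ : Fin (n+1)) 1 -
      EuclideanSpace.single (⟨i, by omega⟩ : Fin (n+1)) 1
  else 0

noncomputable def varpiWt (n i : ℕ) : EuclideanSpace ℝ (Fin (n+1)) :=
  (EuclideanSpace.equiv (Fin (n+1)) ℝ).symm
    (fun t => (if (t : ℕ) + 1 ≤ i then (1:ℝ) else 0) - (i : ℝ) / (n+1))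

noncomputable def permAct {m : ℕ} (w : Equiv.Perm (Fin m)) (v : EuclideanSpace ℝ (Fin m)) :
    EuclideanSpace ℝ (Fin m) :=
  (EuclideanSpace.equiv (Fin m) ℝ).symm (fun t => v (w⁻¹ t))

noncomputable def permutohedron (n : ℕ) (lam : EuclideanSpace ℝ (Fin (n+1))) :
    Set (EuclideanSpace ℝ (Fin (n+1))) :=
  convexHull ℝ {y | ∃ w : Equiv.Perm (Fin (n+1)), y = permAct w lam}

noncomputable def sRefl (n i : ℕ) : Equiv.Perm (Fin (n+1)) :=
  if h : 1 ≤ i ∧ i ≤ n then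
    Equiv.swap (⟨i - 1, by omega⟩ : Fin (n+1)) (⟨i, by omega⟩ : Fin (n+1))
  else 1

noncomputable def WJ (n : ℕ) (J : Set ℕ) : Subgroup (Equiv.Perm (Fin (n+1))) :=
  Subgroup.closure (sRefl n '' J)

def northCount (n : ℕ) (D : Fin (2*n) → Bool) (t : ℕ) : ℕ :=
  (Finset.univ.filter (fun s : Fin (2*n) => (s : ℕ) < t ∧ D s = true)).card

def IsDyck (n : ℕ) (D : Fin (2*n) → Bool) : Prop :=
  northCount n D (2*n) = n ∧ ∀ t ≤ 2*n, t ≤ 2 * northCount n D t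

instance (n : ℕ) : DecidablePred (IsDyck n) := fun D => by unfold IsDyck; infer_instance

def uOf (n : ℕ) (D : Fin (2*n) → Bool) (t : Fin (2*n)) : ℕ := (t : ℕ) - northCount n D (t : ℕ)

def KSet (n : ℕ) (D : Fin (2*n) → Bool) (t : Fin (2*n)) : Finset ℕ :=
  (Finset.Icc 1 (n - uOf n D t)).filter (fun k =>
    northCount n D ((t : ℕ) + 2*k) = northCount n D (t : ℕ) + k ∧
    ∀ m ∈ Finset.range (2*k+1), m + 2 * northCount n D (t : ℕ) ≤ 2 * northCount n D ((t : ℕ) + m))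

def dOf (n : ℕ) (D : Fin (2*n) → Bool) (t : Fin (2*n)) : ℕ := WithBot.unbotD 0 (KSet n D t).max
def iOf (n : ℕ) (D : Fin (2*n) → Bool) (t : Fin (2*n)) : ℕ := WithTop.untopD 0 (KSet n D t).min

noncomputable def cEnt (d i j : ℕ) : ℝ := ((min i j : ℕ) : ℝ) - (i * j : ℝ) / (d + 1)

noncomputable def Gamma' (d i u : ℕ) (x : ℕ → ℝ) : ℝ :=
  (1 / (d * Real.sqrt (cEnt d i i))) * (Nat.choose (d+1) i) *
    ∑ j ∈ Finset.Icc 1 d, cEnt d i j * x (j + u)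

noncomputable def GammaPrimeD (n : ℕ) (D : Fin (2*n) → Bool) (x : ℕ → ℝ) : ℝ :=
  ∏ t ∈ Finset.univ.filter (fun t => D t = true), Gamma' (dOf n D t) (iOf n D t) (uOf n D t) x

section AuxProof

open Finset

lemma northCount_zero (n : ℕ) (D : Fin (2*n) → Bool) : northCount n D 0 = 0 := by
  simp [northCount]

lemma northCount_succ (n : ℕ) (D : Fin (2*n) → Bool) (t : ℕ) (ht : t < 2*n) :
    northCount n D (t+1) = northCount n D t + (if D ⟨t, ht⟩ then 1 else 0) := by
  unfold northCount
  have h1 : (Finset.univ.filter (fun s : Fin (2*n) => (s : ℕ) < t + 1 ∧ D s = true))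
      = (Finset.univ.filter (fun s : Fin (2*n) => (s : ℕ) < t ∧ D s = true)) ∪
        (Finset.univ.filter (fun s : Fin (2*n) => s = ⟨t, ht⟩ ∧ D s = true)) := by
    rw [← Finset.filter_or]
    apply Finset.filter_congr
    intro s _
    constructor
    · rintro ⟨hs, hd⟩
      rcases Nat.lt_succ_iff_lt_or_eq.mp hs with h | h
      · exact Or.inl ⟨h, hd⟩
      · exact Or.inr ⟨Fin.ext h, hd⟩
    · rintro (⟨hs, hd⟩ | ⟨hs, hd⟩)
      · exact ⟨Nat.lt_succ_of_lt hs, hd⟩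
      · exact ⟨by rw [hs]; exact Nat.lt_succ_self t, hd⟩
  rw [h1, Finset.card_union_of_disjoint]
  · congr 1
    by_cases hd : D ⟨t, ht⟩ = true
    · rw [if_pos hd]
      have h2 : (Finset.univ.filter (fun s : Fin (2*n) => s = ⟨t, ht⟩ ∧ D s = true))
          = {(⟨t, ht⟩ : Fin (2*n))} := by
        ext s; simp only [Finset.mem_filter, Finset.mem_univ, true_and, Finset.mem_singleton]
        constructor
        · exact fun h => h.1
        · exact fun h => ⟨h, by rw [h]; exact hd⟩
      rw [h2, Finset.card_singleton]
    · rw [if_neg hd]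
      have h2 : (Finset.univ.filter (fun s : Fin (2*n) => s = ⟨t, ht⟩ ∧ D s = true))
          = ∅ := by
        ext s; simp only [Finset.mem_filter, Finset.mem_univ, true_and, Finset.notMem_empty,
          iff_false]
        rintro ⟨rfl, h⟩; exact hd h
      rw [h2, Finset.card_empty]
  · rw [Finset.disjoint_left]
    rintro s hs1 hs2
    simp only [Finset.mem_filter] at hs1 hs2
    rw [hs2.2.1] at hs1
    exact absurd hs1.2.1 (lt_irrefl t)

lemma northCount_succ_of_ge (n : ℕ) (D : Fin (2*n) → Bool) (t : ℕ) (ht : 2*n ≤ t) :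
    northCount n D (t+1) = northCount n D t := by
  unfold northCount
  congr 1
  apply Finset.filter_congr
  intro s _
  have hs : (s : ℕ) < 2*n := s.isLt
  constructor
  · rintro ⟨_, hd⟩; exact ⟨lt_of_lt_of_le hs ht, hd⟩
  · rintro ⟨_, hd⟩; exact ⟨Nat.lt_succ_of_lt (lt_of_lt_of_le hs ht), hd⟩

lemma northCount_succ_le (n : ℕ) (D : Fin (2*n) → Bool) (t : ℕ) :
    northCount n D (t+1) ≤ northCount n D t + 1 := by
  by_cases ht : t < 2*n
  · rw [northCount_succ n D t ht]; split_ifs <;> omega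
  · rw [northCount_succ_of_ge n D t (by omega)]; omega

lemma northCount_mono (n : ℕ) (D : Fin (2*n) → Bool) : Monotone (northCount n D) := by
  intro a b hab
  apply Finset.card_le_card
  intro s hs
  simp only [Finset.mem_filter] at hs ⊢
  exact ⟨hs.1, lt_of_lt_of_le hs.2.1 hab, hs.2.2⟩

lemma northCount_le_self (n : ℕ) (D : Fin (2*n) → Bool) (t : ℕ) : northCount n D t ≤ t := by
  induction t with
  | zero => simp [northCount_zero]
  | succ t ih => exact le_trans (northCount_succ_le n D t) (by omega)

lemma northCount_stable (n : ℕ) (D : Fin (2*n) → Bool) (t : ℕ) (ht : 2*n ≤ t) :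
    northCount n D t = northCount n D (2*n) := by
  induction t with
  | zero =>
    have h0 : 2*n = 0 := by omega
    rw [h0]
  | succ t ih =>
    rcases Nat.lt_or_ge t (2*n) with h | h
    · have h1 : t + 1 = 2*n := by omega
      rw [h1]
    · rw [northCount_succ_of_ge n D t h, ih h]

lemma northCount_le_top (n : ℕ) (D : Fin (2*n) → Bool) (t : ℕ) :
    northCount n D t ≤ northCount n D (2*n) := by
  rcases Nat.lt_or_ge t (2*n) with h | h
  · exact northCount_mono n D (le_of_lt h)
  · rw [northCount_stable n D t h]

noncomputable def hFun (n : ℕ) (D : Fin (2*n) → Bool) (s : ℕ) : ℝ :=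
  if hs : s < 2*n then
    (if D ⟨s, hs⟩ = true then
      cEnt (dOf n D ⟨s, hs⟩) (iOf n D ⟨s, hs⟩) (iOf n D ⟨s, hs⟩) else 1)
  else 1

lemma prod_filter_eq_hFun (n : ℕ) (D : Fin (2*n) → Bool) :
    ∏ t ∈ Finset.univ.filter (fun t => D t = true),
        cEnt (dOf n D t) (iOf n D t) (iOf n D t) = ∏ s ∈ Finset.range (2*n), hFun n D s := by
  rw [Finset.prod_filter, ← Fin.prod_univ_eq_prod_range (hFun n D) (2*n)]
  apply Finset.prod_congr rfl
  intro t _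
  simp only [hFun, t.isLt, dif_pos, Fin.eta]

set_option maxHeartbeats 3000000 in
lemma key_prod (n : ℕ) : ∀ D : Fin (2*n) → Bool, IsDyck n D →
    ∏ s ∈ Finset.range (2*n), hFun n D s = 1 / (n + 1) := by
  induction n using Nat.strong_induction_on with
  | _ n ih =>
  intro D hD
  rcases Nat.eq_zero_or_pos n with rfl | hn
  · simp
  obtain ⟨hDn, hDyck⟩ := hD
  -- first return j
  have hex : ∃ k, 1 ≤ k ∧ northCount n D (2*k) = k := ⟨n, hn, hDn⟩
  set j := Nat.find hex with hjdef
  obtain ⟨hj1, hj2⟩ : 1 ≤ j ∧ northCount n D (2*j) = j := Nat.find_spec hex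
  have hjmin : ∀ k, k < j → ¬(1 ≤ k ∧ northCount n D (2*k) = k) :=
    fun k hk => Nat.find_min hex hk
  have hjn : j ≤ n := Nat.find_le ⟨hn, hDn⟩
  clear_value j
  clear hjdef hex
  -- strictly above the diagonal before the first return
  have hstrict : ∀ t, 0 < t → t < 2*j → t < 2 * northCount n D t := by
    intro t ht0 htj
    have h1 : t ≤ 2 * northCount n D t := hDyck t (by omega)
    rcases lt_or_eq_of_le h1 with h | h
    · exact h
    exfalso
    have h2 : northCount n D (2 * northCount n D t) = northCount n D t := by
      rw [← h]
    exact hjmin (northCount n D t) (by omega) ⟨by omega, h2⟩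
  have hN1 : northCount n D 1 = 1 := by
    have h1 : 1 ≤ 2 * northCount n D 1 := hDyck 1 (by omega)
    have h2 : northCount n D 1 ≤ 1 := northCount_le_self n D 1
    omega
  have hD0 : D ⟨0, by omega⟩ = true := by
    have h0 := northCount_succ n D 0 (by omega)
    rcases Bool.eq_false_or_eq_true (D ⟨0, by omega⟩) with h | h
    · exact h
    · exfalso
      rw [h] at h0
      simp at h0
      rw [northCount_zero] at h0
      omega
  have hN2j1 : northCount n D (2*j - 1) = j := by
    have ha := hstrict (2*j - 1) (by omega) (by omega)
    have hb : northCount n D (2*j - 1) ≤ northCount n D (2*j) :=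
      northCount_mono n D (by omega)
    omega
  have hD2j1 : D ⟨2*j - 1, by omega⟩ = false := by
    have h0 := northCount_succ n D (2*j - 1) (by omega)
    rcases Bool.eq_false_or_eq_true (D ⟨2*j - 1, by omega⟩) with h | h
    · exfalso
      rw [h] at h0
      simp at h0
      rw [show 2*j - 1 + 1 = 2*j by omega] at h0
      omega
    · exact h
  -- subpaths
  set A : Fin (2*(j-1)) → Bool := fun s => D ⟨(s : ℕ) + 1, by have := s.isLt; omega⟩ with hAdef
  set B : Fin (2*(n-j)) → Bool := fun s => D ⟨(s : ℕ) + 2*j, by have := s.isLt; omega⟩ with hBdef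
  -- northCount relations
  have hArel : ∀ s, s ≤ 2*j - 2 → northCount (j-1) A s + 1 = northCount n D (s+1) := by
    intro s
    induction s with
    | zero => intro _; rw [northCount_zero, hN1]
    | succ s ihs =>
      intro hs
      have hs1 : s < 2*(j-1) := by omega
      have hs2 : s + 1 < 2*n := by omega
      rw [northCount_succ (j-1) A s hs1, northCount_succ n D (s+1) hs2]
      have hAD : A ⟨s, hs1⟩ = D ⟨s+1, hs2⟩ := rfl
      rw [hAD]
      have := ihs (by omega)
      split_ifs <;> omega
  have hBrel : ∀ s, northCount (n-j) B s + j = northCount n D (s + 2*j) := by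
    intro s
    induction s with
    | zero =>
      rw [northCount_zero, Nat.zero_add, Nat.zero_add, hj2]
    | succ s ihs =>
      rcases Nat.lt_or_ge s (2*(n-j)) with hs1 | hs1
      · have hs2 : s + 2*j < 2*n := by omega
        rw [northCount_succ (n-j) B s hs1, show s + 1 + 2*j = (s + 2*j) + 1 by omega,
          northCount_succ n D (s + 2*j) hs2]
        have hBD : B ⟨s, hs1⟩ = D ⟨s + 2*j, hs2⟩ := rfl
        rw [hBD]
        split_ifs <;> omega
      · rw [northCount_succ_of_ge (n-j) B s hs1, show s + 1 + 2*j = (s + 2*j) + 1 by omega,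
          northCount_succ_of_ge n D (s + 2*j) (by omega)]
        exact ihs
  have hNAtop : northCount (j-1) A (2*(j-1)) = j - 1 := by
    have := hArel (2*(j-1)) (by omega)
    rw [show 2*(j-1) + 1 = 2*j - 1 by omega, hN2j1] at this
    omega
  have hNA_le : ∀ s, northCount (j-1) A s ≤ j - 1 := by
    intro s
    have := northCount_le_top (j-1) A s
    omega
  have hDyckA : IsDyck (j-1) A := by
    refine ⟨hNAtop, ?_⟩
    intro t ht
    rcases Nat.eq_zero_or_pos t with rfl | ht0
    · omega
    have h1 := hArel t (by omega)
    have h2 := hstrict (t+1) (by omega) (by omega)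
    omega
  have hNBtop : northCount (n-j) B (2*(n-j)) = n - j := by
    have := hBrel (2*(n-j))
    rw [show 2*(n-j) + 2*j = 2*n by omega, hDn] at this
    omega
  have hNB_le : ∀ s, northCount (n-j) B s ≤ n - j := by
    intro s
    have := northCount_le_top (n-j) B s
    omega
  have hDyckB : IsDyck (n-j) B := by
    refine ⟨hNBtop, ?_⟩
    intro t ht
    have h1 := hBrel t
    have h2 := hDyck (t + 2*j) (by omega)
    omega
  -- KSet transfer for A
  have hKA : ∀ (s : ℕ) (hs : s < 2*(j-1)),
      KSet n D ⟨s+1, by omega⟩ = KSet (j-1) A ⟨s, hs⟩ := by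
    intro s hs
    have hNt := hArel s (by omega)
    have hstr := hstrict (s+1) (by omega) (by omega)
    have hNt_le := northCount_le_self n D (s+1)
    have hNAs_le := northCount_le_self (j-1) A s
    have hNtop : northCount n D (s+1) ≤ n := by
      have := northCount_le_top n D (s+1); omega
    ext k
    simp only [KSet, Finset.mem_filter, Finset.mem_Icc, uOf]
    constructor
    · rintro ⟨⟨hk1, hk2⟩, hkN, hkM⟩
      have hbound : s + 1 + 2*k ≤ 2*j - 1 := by
        by_contra hcon
        have hm := hkM (2*j - (s+1)) (by simp only [Finset.mem_range]; omega)
        rw [show s + 1 + (2*j - (s+1)) = 2*j by omega, hj2] at hm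
        omega
      have hk2' : k + northCount n D (s+1) ≤ j := by
        have h3 : northCount n D (s+1+2*k) ≤ northCount n D (2*j - 1) :=
          northCount_mono n D (by omega)
        rw [hN2j1] at h3
        omega
      have hN2k := hArel (s + 2*k) (by omega)
      rw [show s + 2*k + 1 = s + 1 + 2*k by omega] at hN2k
      refine ⟨⟨hk1, by omega⟩, by omega, ?_⟩
      intro m hm
      simp only [Finset.mem_range] at hm
      have hNm := hArel (s + m) (by omega)
      rw [show s + m + 1 = s + 1 + m by omega] at hNm
      have := hkM m (by simp only [Finset.mem_range]; omega)
      omega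
    · rintro ⟨⟨hk1, hk2⟩, hkN, hkM⟩
      have hkj : k + northCount (j-1) A s ≤ j - 1 := by
        have := hNA_le (s + 2*k)
        omega
      have hbound : s + 1 + 2*k ≤ 2*j - 1 := by omega
      have hN2k := hArel (s + 2*k) (by omega)
      rw [show s + 2*k + 1 = s + 1 + 2*k by omega] at hN2k
      refine ⟨⟨hk1, by omega⟩, by omega, ?_⟩
      intro m hm
      simp only [Finset.mem_range] at hm
      have hNm := hArel (s + m) (by omega)
      rw [show s + m + 1 = s + 1 + m by omega] at hNm
      have := hkM m (by simp only [Finset.mem_range]; omega)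
      omega
  -- KSet transfer for B
  have hKB : ∀ (s : ℕ) (hs : s < 2*(n-j)),
      KSet n D ⟨s + 2*j, by omega⟩ = KSet (n-j) B ⟨s, hs⟩ := by
    intro s hs
    have hNt := hBrel s
    have hNt_le := northCount_le_self n D (s + 2*j)
    have hNBs_le := northCount_le_self (n-j) B s
    have hNBub := hNB_le s
    have hBdy : s ≤ 2 * northCount (n-j) B s := hDyckB.2 s (by omega)
    ext k
    simp only [KSet, Finset.mem_filter, Finset.mem_Icc, uOf]
    constructor
    · rintro ⟨⟨hk1, hk2⟩, hkN, hkM⟩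
      have hN2k := hBrel (s + 2*k)
      rw [show s + 2*k + 2*j = s + 2*j + 2*k by omega] at hN2k
      refine ⟨⟨hk1, by omega⟩, by omega, ?_⟩
      intro m hm
      simp only [Finset.mem_range] at hm
      have hNm := hBrel (s + m)
      rw [show s + m + 2*j = s + 2*j + m by omega] at hNm
      have := hkM m (by simp only [Finset.mem_range]; omega)
      omega
    · rintro ⟨⟨hk1, hk2⟩, hkN, hkM⟩
      have hN2k := hBrel (s + 2*k)
      rw [show s + 2*k + 2*j = s + 2*j + 2*k by omega] at hN2k
      refine ⟨⟨hk1, by omega⟩, by omega, ?_⟩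
      intro m hm
      simp only [Finset.mem_range] at hm
      have hNm := hBrel (s + m)
      rw [show s + m + 2*j = s + 2*j + m by omega] at hNm
      have := hkM m (by simp only [Finset.mem_range]; omega)
      omega
  -- values at t = 0
  have hmem_n : n ∈ KSet n D ⟨0, by omega⟩ := by
    simp only [KSet, Finset.mem_filter, Finset.mem_Icc, uOf]
    refine ⟨⟨hn, ?_⟩, ?_, ?_⟩
    · simp [northCount_zero]
    · simp [northCount_zero, hDn]
    · intro m hm
      simp only [Finset.mem_range] at hm
      rw [northCount_zero]
      simpa using hDyck m (by omega)
  have hmem_j : j ∈ KSet n D ⟨0, by omega⟩ := by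
    simp only [KSet, Finset.mem_filter, Finset.mem_Icc, uOf]
    refine ⟨⟨hj1, ?_⟩, ?_, ?_⟩
    · show j ≤ n - ((0:ℕ) - northCount n D 0)
      rw [northCount_zero]
      omega
    · simp [northCount_zero, hj2]
    · intro m hm
      simp only [Finset.mem_range] at hm
      rw [northCount_zero]
      simpa using hDyck m (by omega)
  have hub : ∀ x ∈ KSet n D ⟨0, by omega⟩, x ≤ n := by
    intro x hx
    simp only [KSet, Finset.mem_filter, Finset.mem_Icc, uOf] at hx
    rw [northCount_zero] at hx
    omega
  have hlb : ∀ x ∈ KSet n D ⟨0, by omega⟩, j ≤ x := by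
    intro x hx
    simp only [KSet, Finset.mem_filter, Finset.mem_Icc, uOf] at hx
    obtain ⟨⟨hx1, _⟩, hxN, _⟩ := hx
    simp only [northCount_zero, Nat.zero_add] at hxN
    by_contra hcon
    exact hjmin x (by omega) ⟨hx1, by omega⟩
  have hd0 : dOf n D ⟨0, by omega⟩ = n := by
    unfold dOf
    have hmax : (KSet n D ⟨0, by omega⟩).max = (n : WithBot ℕ) := by
      apply le_antisymm
      · exact Finset.max_le (fun x hx => WithBot.coe_le_coe.mpr (hub x hx))
      · exact Finset.le_max hmem_n
    rw [hmax]
    rfl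
  have hi0 : iOf n D ⟨0, by omega⟩ = j := by
    unfold iOf
    have hmin : (KSet n D ⟨0, by omega⟩).min = (j : ℕ∞) := by
      apply le_antisymm
      · exact Finset.min_le hmem_j
      · exact Finset.le_min (fun x hx => WithTop.coe_le_coe.mpr (hlb x hx))
    rw [hmin]
    rfl
  -- product splitting
  have ihA := ih (j-1) (by omega) A hDyckA
  have ihB := ih (n-j) (by omega) B hDyckB
  have hA_prod : ∏ s ∈ Finset.Ico 1 (2*j - 1), hFun n D s
      = ∏ s ∈ Finset.range (2*(j-1)), hFun (j-1) A s := by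
    rw [Finset.prod_Ico_eq_prod_range, show 2*j - 1 - 1 = 2*(j-1) by omega]
    apply Finset.prod_congr rfl
    intro s hsr
    simp only [Finset.mem_range] at hsr
    rw [Nat.add_comm 1 s]
    have h1 : s + 1 < 2*n := by omega
    simp only [hFun, dif_pos h1, dif_pos hsr]
    have hDA : D ⟨s+1, h1⟩ = A ⟨s, hsr⟩ := rfl
    have hK := hKA s hsr
    have hd : dOf n D ⟨s+1, h1⟩ = dOf (j-1) A ⟨s, hsr⟩ := by
      unfold dOf; rw [hK]
    have hi : iOf n D ⟨s+1, h1⟩ = iOf (j-1) A ⟨s, hsr⟩ := by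
      unfold iOf; rw [hK]
    rw [hDA, hd, hi]
  have hB_prod : ∏ s ∈ Finset.Ico (2*j) (2*n), hFun n D s
      = ∏ s ∈ Finset.range (2*(n-j)), hFun (n-j) B s := by
    rw [Finset.prod_Ico_eq_prod_range, show 2*n - 2*j = 2*(n-j) by omega]
    apply Finset.prod_congr rfl
    intro s hsr
    simp only [Finset.mem_range] at hsr
    rw [Nat.add_comm (2*j) s]
    have h1 : s + 2*j < 2*n := by omega
    simp only [hFun, dif_pos h1, dif_pos hsr]
    have hDB : D ⟨s + 2*j, h1⟩ = B ⟨s, hsr⟩ := rfl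
    have hK := hKB s hsr
    have hd : dOf n D ⟨s + 2*j, h1⟩ = dOf (n-j) B ⟨s, hsr⟩ := by
      unfold dOf; rw [hK]
    have hi : iOf n D ⟨s + 2*j, h1⟩ = iOf (n-j) B ⟨s, hsr⟩ := by
      unfold iOf; rw [hK]
    rw [hDB, hd, hi]
  have hsplit : ∏ s ∈ Finset.range (2*n), hFun n D s
      = hFun n D 0 * (∏ s ∈ Finset.Ico 1 (2*j - 1), hFun n D s) *
        (hFun n D (2*j - 1) * ∏ s ∈ Finset.Ico (2*j) (2*n), hFun n D s) := by
    rw [Finset.range_eq_Ico,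
      ← Finset.prod_Ico_consecutive (hFun n D) (show (0:ℕ) ≤ 2*j - 1 by omega)
        (show 2*j - 1 ≤ 2*n by omega),
      ← Finset.prod_Ico_consecutive (hFun n D) (show (0:ℕ) ≤ 1 by omega)
        (show 1 ≤ 2*j - 1 by omega),
      ← Finset.prod_Ico_consecutive (hFun n D) (show 2*j - 1 ≤ 2*j by omega)
        (show 2*j ≤ 2*n by omega)]
    have h01 : Finset.Ico (0:ℕ) 1 = {0} := by
      ext x
      simp only [Finset.mem_Ico, Finset.mem_singleton]
      omega
    have hIco01 : ∏ s ∈ Finset.Ico 0 1, hFun n D s = hFun n D 0 := by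
      rw [h01, Finset.prod_singleton]
    have hsing : Finset.Ico (2*j - 1) (2*j) = {2*j - 1} := by
      ext x
      simp only [Finset.mem_Ico, Finset.mem_singleton]
      omega
    rw [hIco01]
    rw [hsing]
    rw [Finset.prod_singleton]
  have hF0 : hFun n D 0 = cEnt n j j := by
    simp only [hFun, dif_pos (show (0:ℕ) < 2*n by omega)]
    rw [if_pos hD0]
    simp only [hd0, hi0]
  have hF2j1 : hFun n D (2*j - 1) = 1 := by
    simp only [hFun, dif_pos (show 2*j - 1 < 2*n by omega)]
    rw [if_neg (by simp [hD2j1])]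
  rw [hsplit, hA_prod, hB_prod, hF0, hF2j1, ihA, ihB]
  -- final arithmetic
  have hc1 : ((j:ℝ)) ≠ 0 := by positivity
  have hc2 : ((n:ℝ)) + 1 ≠ 0 := by positivity
  have hjR : (1:ℝ) ≤ (j:ℝ) := by exact_mod_cast hj1
  have hjnR : (j:ℝ) ≤ (n:ℝ) := by exact_mod_cast hjn
  have hcast1 : (((j-1 : ℕ) : ℝ)) = (j:ℝ) - 1 := by
    have : (1:ℕ) ≤ j := hj1
    push_cast [this]
    ring
  have hcast2 : (((n-j : ℕ) : ℝ)) = (n:ℝ) - (j:ℝ) := by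
    push_cast [hjn]
    ring
  rw [hcast1, hcast2]
  have hc3 : (n:ℝ) - (j:ℝ) + 1 ≠ 0 := by nlinarith
  simp only [cEnt, min_self]
  rw [one_mul]
  have hexp : ((j:ℝ) - (j:ℝ)*(j:ℝ)/((n:ℝ)+1)) = (j:ℝ) * ((n:ℝ) + 1 - (j:ℝ)) / ((n:ℝ)+1) := by
    field_simp
  push_cast
  rw [hexp]
  rw [show (j:ℝ) - 1 + 1 = (j:ℝ) by ring]
  field_simp
  ring

end AuxProof

theorem prod_cN_eq_one_div_n_succ
    (n : ℕ) (hn : 1 ≤ n) (D : Fin (2*n) → Bool) (hD : IsDyck n D) :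
    ∏ t ∈ Finset.univ.filter (fun t => D t = true),
        cEnt (dOf n D t) (iOf n D t) (iOf n D t) = 1 / (n + 1) := by
  rw [prod_filter_eq_hFun]
  exact key_prod n D hD

end
end

section
/- Fix n ≥ 1 and 1 ≤ k ≤ n, and let D ∈ D_n^k, i.e., D is an n-Dyck path passing through (k,k) but through no (k',k') with 1 ≤ k' < k. Let D_b ∈ D_{k−1} be obtained from the sub-path of D from (0,1) to (k−1,k) by decreasing all y-coordinates by 1, and let D_t ∈ D_{n−k} be obtained from the sub-path of D from (k,k) to (n,n) by decreasing all x- and y-coordinates by k. Then Γ'_D = Γ'_{n,k} · Γ'_{D_b} · Γ'_{D_t}[k]. -/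
open scoped RealInnerProductSpace
open MeasureTheory

attribute [local instance 0] Classical.propDecidable

noncomputable section

/-- `D ∈ D_n^k`: an `n`-Dyck path passing through `(k,k)` but through no `(k',k')`
with `1 ≤ k' < k`. -/
def InDnk (n k : ℕ) (D : Fin (2*n) → Bool) : Prop :=
  IsDyck n D ∧ northCount n D (2*k) = k ∧
    ∀ k', 1 ≤ k' → k' < k → northCount n D (2*k') ≠ k'

/-- `D_b`: the sub-path of `D` from `(0,1)` to `(k-1,k)` with `y`-coordinates decreased
by `1`, i.e. the steps of `D` with indices `1, …, 2k-2`. -/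
def Db (n k : ℕ) (D : Fin (2*n) → Bool) : Fin (2*(k-1)) → Bool :=
  fun s => if h : (s : ℕ) + 1 < 2*n then D ⟨(s : ℕ) + 1, h⟩ else false

/-- `D_t`: the sub-path of `D` from `(k,k)` to `(n,n)` with both coordinates decreased
by `k`, i.e. the steps of `D` with indices `2k, …, 2n-1`. -/
def Dt (n k : ℕ) (D : Fin (2*n) → Bool) : Fin (2*(n-k)) → Bool :=
  fun s => if h : (s : ℕ) + 2*k < 2*n then D ⟨(s : ℕ) + 2*k, h⟩ else false



def ncf (E : ℕ → Bool) (t : ℕ) : ℕ := ((Finset.range t).filter (fun s => E s = true)).card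

def ext (n : ℕ) (D : Fin (2*n) → Bool) : ℕ → Bool :=
  fun s => if h : s < 2*n then D ⟨s, h⟩ else false

lemma northCount_eq (n : ℕ) (D : Fin (2*n) → Bool) (t : ℕ) :
    northCount n D t = ncf (ext n D) t := by
  unfold northCount ncf
  refine Finset.card_bij (fun s _ => (s : ℕ)) ?_ ?_ ?_
  · intro s hs
    simp only [Finset.mem_filter, Finset.mem_univ, true_and] at hs
    simp [Finset.mem_filter, Finset.mem_range, hs.1, ext, s.isLt, hs.2]
  · intro a ha b hb hab; exact Fin.ext hab
  · intro b hb
    simp only [Finset.mem_filter, Finset.mem_range] at hb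
    simp only [ext] at hb
    obtain ⟨hb1, hb2⟩ := hb
    by_cases h : b < 2*n
    · exact ⟨⟨b, h⟩, by simp [Finset.mem_filter, hb1]; simpa [h] using hb2, rfl⟩
    · simp [h] at hb2

lemma ncf_zero (E : ℕ → Bool) : ncf E 0 = 0 := by simp [ncf]

lemma ncf_succ (E : ℕ → Bool) (t : ℕ) :
    ncf E (t+1) = ncf E t + (if E t then 1 else 0) := by
  unfold ncf
  rw [Finset.range_add_one, Finset.filter_insert]
  by_cases h : E t = true
  · rw [if_pos h, Finset.card_insert_of_notMem (by simp)]; simp [h]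
  · simp [h]

lemma ncf_mono (E : ℕ → Bool) {a b : ℕ} (h : a ≤ b) : ncf E a ≤ ncf E b := by
  apply Finset.card_le_card
  intro x hx
  simp only [Finset.mem_filter, Finset.mem_range] at *
  exact ⟨lt_of_lt_of_le hx.1 h, hx.2⟩

lemma ncf_le (E : ℕ → Bool) (t : ℕ) : ncf E t ≤ t := by
  calc ncf E t ≤ (Finset.range t).card := Finset.card_filter_le _ _
  _ = t := Finset.card_range t

lemma ncf_add (E : ℕ → Bool) (a b : ℕ) :
    ncf E (a + b) = ncf E a + ncf (fun s => E (s + a)) b := by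
  induction b with
  | zero => simp [ncf_zero]
  | succ b ih => rw [← Nat.add_assoc, ncf_succ, ih, ncf_succ, Nat.add_assoc, Nat.add_comm b a]

lemma ncf_congr {E F : ℕ → Bool} (t : ℕ) (h : ∀ s < t, E s = F s) : ncf E t = ncf F t := by
  unfold ncf
  congr 1
  apply Finset.filter_congr
  intro s hs
  simp only [Finset.mem_range] at hs
  rw [h s hs]

lemma ncf_stable {E : ℕ → Bool} {a : ℕ} (hE : ∀ j, a ≤ j → E j = false) {b : ℕ} (h : a ≤ b) :
    ncf E b = ncf E a := by
  induction b with
  | zero => rw [Nat.le_zero.mp h]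
  | succ b ih =>
    rcases Nat.lt_or_ge a (b+1) with h' | h'
    · rw [ncf_succ, hE b (by omega), ih (by omega)]; simp
    · have : a = b + 1 := by omega
      rw [this]

section
variable {n k : ℕ} {D : Fin (2*n) → Bool}

lemma mem_KSet_iff (t : Fin (2*n)) (k' : ℕ) :
    k' ∈ KSet n D t ↔ (1 ≤ k' ∧ k' ≤ n - ((t:ℕ) - ncf (ext n D) (t:ℕ))) ∧
      ncf (ext n D) ((t:ℕ) + 2*k') = ncf (ext n D) (t:ℕ) + k' ∧
      ∀ m ≤ 2*k', m + 2 * ncf (ext n D) (t:ℕ) ≤ 2 * ncf (ext n D) ((t:ℕ) + m) := by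
  simp [KSet, uOf, northCount_eq, Finset.mem_filter, Finset.mem_Icc, Finset.mem_range,
    Nat.lt_succ_iff]

variable (hk1 : 1 ≤ k) (hkn : k ≤ n) (hD : InDnk n k D)
include hD

lemma hnc2n : ncf (ext n D) (2*n) = n := by
  rw [← northCount_eq]; exact hD.1.1

lemma hDyck : ∀ t ≤ 2*n, t ≤ 2 * ncf (ext n D) t := by
  intro t ht; rw [← northCount_eq]; exact hD.1.2 t ht

lemma hcap : ∀ t, 2*n ≤ t → ncf (ext n D) t = n := by
  intro t ht
  rw [ncf_stable (a := 2*n) (fun j hj => by simp [ext, Nat.not_lt.mpr hj]) ht]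
  exact hnc2n hD

lemma hnck : ∀ t, ncf (ext n D) t ≤ n := by
  intro t
  rcases le_or_gt (2*n) t with h | h
  · rw [hcap hD t h]
  · calc ncf (ext n D) t ≤ ncf (ext n D) (2*n) := ncf_mono _ (le_of_lt h)
      _ = n := hnc2n hD

include hkn in
lemma hstrict : ∀ t, 1 ≤ t → t < 2*k → t < 2 * ncf (ext n D) t := by
  intro t ht htk
  have h1 : t ≤ 2 * ncf (ext n D) t := hDyck hD t (by omega)
  rcases Nat.lt_or_ge t (2 * ncf (ext n D) t) with h | h
  · exact h
  · exfalso
    have heq : t = 2 * ncf (ext n D) t := le_antisymm h1 h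
    set k' := ncf (ext n D) t with hk'
    have : northCount n D (2*k') = k' := by
      rw [northCount_eq, ← heq]
    exact hD.2.2 k' (by omega) (by omega) this

lemma h2k : ncf (ext n D) (2*k) = k := by rw [← northCount_eq]; exact hD.2.1

include hk1 hkn in
lemma h2k1 : ncf (ext n D) (2*k-1) = k := by
  have h1 : ncf (ext n D) (2*k-1) ≤ ncf (ext n D) (2*k) := ncf_mono _ (by omega)
  have h2 := hstrict hkn hD (2*k-1) (by omega) (by omega)
  have := h2k (D := D) hD
  omega

include hk1 hkn in
lemma hE2k1 : ext n D (2*k-1) = false := by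
  have h1 := ncf_succ (ext n D) (2*k-1)
  rw [show 2*k-1+1 = 2*k by omega, h2k hD, h2k1 hk1 hkn hD] at h1
  by_contra h
  simp only [Bool.not_eq_false] at h
  rw [if_pos h] at h1
  omega

include hk1 hkn in
lemma hE0 : ext n D 0 = true := by
  have h1 := ncf_succ (ext n D) 0
  have h2 := hstrict hkn hD 1 le_rfl (by omega)
  rw [ncf_zero] at h1
  by_contra h
  simp only [Bool.not_eq_true] at h
  rw [if_neg (by simp [h]), Nat.zero_add] at h1
  omega

end


def Kcond (E : ℕ → Bool) (N a k' : ℕ) : Prop :=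
  (1 ≤ k' ∧ k' ≤ N - (a - ncf E a)) ∧ ncf E (a + 2*k') = ncf E a + k' ∧
    ∀ m ≤ 2*k', m + 2 * ncf E a ≤ 2 * ncf E (a + m)

lemma mem_KSet_iff' {n : ℕ} {D : Fin (2*n) → Bool} (t : Fin (2*n)) (k' : ℕ) :
    k' ∈ KSet n D t ↔ Kcond (ext n D) n (t:ℕ) k' := by
  rw [mem_KSet_iff]; rfl

section
variable {n k : ℕ} {D : Fin (2*n) → Bool}
variable (hk1 : 1 ≤ k) (hkn : k ≤ n) (hD : InDnk n k D)
include hk1 hkn hD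

-- bottom northCount relation
lemma Lbot (s : ℕ) (hs : s ≤ 2*(k-1)) :
    ncf (ext n D) (s+1) = ncf (ext (k-1) (Db n k D)) s + 1 := by
  have h1 : ncf (ext n D) (s+1) = ncf (ext n D) 1 + ncf (fun j => ext n D (j+1)) s := by
    rw [Nat.add_comm s 1] at *
    exact ncf_add _ 1 s
  have h2 : ncf (ext n D) 1 = 1 := by
    rw [show (1:ℕ) = 0 + 1 from rfl, ncf_succ, ncf_zero, hE0 hk1 hkn hD]; simp
  have h3 : ncf (fun j => ext n D (j+1)) s = ncf (ext (k-1) (Db n k D)) s := by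
    apply ncf_congr
    intro j hj
    have hj2 : j < 2*(k-1) := lt_of_lt_of_le hj hs
    have hj3 : j + 1 < 2*n := by omega
    simp only [ext, Db, dif_pos hj2, dif_pos hj3]
  omega

-- top northCount relation, valid for all s
lemma Ltop (s : ℕ) :
    ncf (ext n D) (s + 2*k) = ncf (ext (n-k) (Dt n k D)) s + k := by
  have key : ∀ s ≤ 2*(n-k),
      ncf (ext n D) (s + 2*k) = ncf (ext (n-k) (Dt n k D)) s + k := by
    intro s hs
    have h1 : ncf (ext n D) (2*k + s) = ncf (ext n D) (2*k) + ncf (fun j => ext n D (j + 2*k)) s :=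
      ncf_add _ (2*k) s
    have h3 : ncf (fun j => ext n D (j + 2*k)) s = ncf (ext (n-k) (Dt n k D)) s := by
      apply ncf_congr
      intro j hj
      have hj2 : j < 2*(n-k) := lt_of_lt_of_le hj hs
      have hj3 : j + 2*k < 2*n := by omega
      simp only [ext, Dt, dif_pos hj2, dif_pos hj3]
    rw [Nat.add_comm s (2*k), h1, h3, h2k hD, Nat.add_comm]
  rcases le_or_gt s (2*(n-k)) with hs | hs
  · exact key s hs
  · have hfull := key (2*(n-k)) le_rfl
    have hl : ncf (ext n D) (2*(n-k) + 2*k) = n := hcap hD _ (by omega)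
    have hstab : ncf (ext (n-k) (Dt n k D)) s = ncf (ext (n-k) (Dt n k D)) (2*(n-k)) := by
      apply ncf_stable _ (le_of_lt hs)
      intro j hj
      simp [ext, Nat.not_lt.mpr hj]
    rw [hcap hD _ (by omega), hstab]
    omega

lemma ncb_le : ∀ s, ncf (ext (k-1) (Db n k D)) s ≤ k - 1 := by
  intro s
  have h1 := Lbot hk1 hkn hD (2*(k-1)) le_rfl
  have h2 : (2*(k-1)) + 1 = 2*k - 1 := by omega
  rw [h2, h2k1 hk1 hkn hD] at h1
  rcases le_or_gt s (2*(k-1)) with hs | hs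
  · have := ncf_mono (ext (k-1) (Db n k D)) hs; omega
  · have hstab : ncf (ext (k-1) (Db n k D)) s = ncf (ext (k-1) (Db n k D)) (2*(k-1)) := by
      apply ncf_stable _ (le_of_lt hs)
      intro j hj
      simp [ext, Nat.not_lt.mpr hj]
    omega

lemma condbot (a' k' : ℕ) (ht2 : a'+1 ≤ 2*k-2) :
    Kcond (ext n D) n (a'+1) k' ↔ Kcond (ext (k-1) (Db n k D)) (k-1) a' k' := by
  set E := ext n D with hE
  set Eb := ext (k-1) (Db n k D) with hEb
  have hrel : ∀ s ≤ 2*(k-1), ncf E (s+1) = ncf Eb s + 1 := Lbot hk1 hkn hD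
  have hnca : ncf E (a'+1) = ncf Eb a' + 1 := hrel a' (by omega)
  have hstr : a'+1 < 2 * ncf E (a'+1) := hstrict hkn hD (a'+1) (by omega) (by omega)
  have hble : ncf Eb a' ≤ a' := ncf_le _ _
  have hncbk := ncb_le hk1 hkn hD
  unfold Kcond
  rcases le_or_gt (a'+1 + 2*k') (2*k - 1) with hcase | hcase
  · -- good case
    have hrew : ∀ m ≤ 2*k', ncf E (a'+1+m) = ncf Eb (a'+m) + 1 := by
      intro m hm
      have h := hrel (a'+m) (by omega)
      rw [show a'+m+1 = a'+1+m by omega] at h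
      exact h
    constructor
    · rintro ⟨⟨hk'1, _⟩, hmain, hdyck⟩
      have hmono : ncf E (a'+1+2*k') ≤ ncf E (2*k-1) := ncf_mono _ (by omega)
      have h2k1' : ncf E (2*k-1) = k := h2k1 hk1 hkn hD
      have h0 := hrew (2*k') le_rfl
      refine ⟨⟨hk'1, by omega⟩, by omega, ?_⟩
      intro m hm
      have h1 := hdyck m hm
      have h2 := hrew m hm
      omega
    · rintro ⟨⟨hk'1, hk'2⟩, hmain, hdyck⟩
      have h0 := hrew (2*k') le_rfl
      refine ⟨⟨hk'1, by omega⟩, by omega, ?_⟩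
      intro m hm
      have h1 := hdyck m hm
      have h2 := hrew m hm
      omega
  · -- degenerate case: both sides fail
    have h2k' : ncf E (2*k) = k := h2k hD
    constructor
    · rintro ⟨⟨hk'1, _⟩, hmain, hdyck⟩
      exfalso
      rcases eq_or_lt_of_le (show 2*k ≤ a'+1 + 2*k' by omega) with heq | hlt
      · rw [heq] at h2k'
        omega
      · have hm := hdyck (2*k - (a'+1)) (by omega)
        rw [show a'+1 + (2*k - (a'+1)) = 2*k by omega] at hm
        omega
    · rintro ⟨⟨hk'1, _⟩, hmain, _⟩
      exfalso
      have h1 : ncf Eb (a' + 2*k') ≤ k - 1 := hncbk _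
      omega

lemma condtop (a' k' : ℕ) :
    Kcond (ext n D) n (a' + 2*k) k' ↔ Kcond (ext (n-k) (Dt n k D)) (n-k) a' k' := by
  set E := ext n D with hE
  set Et := ext (n-k) (Dt n k D) with hEt
  have hrel : ∀ s, ncf E (s + 2*k) = ncf Et s + k := Ltop hk1 hkn hD
  have hnca : ncf E (a' + 2*k) = ncf Et a' + k := hrel a'
  have hle : ncf Et a' ≤ a' := ncf_le _ _
  have hrew : ∀ m, ncf E (a' + 2*k + m) = ncf Et (a' + m) + k := by
    intro m
    have h := hrel (a' + m)
    rw [show a'+m+2*k = a'+2*k+m by omega] at h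
    exact h
  unfold Kcond
  constructor
  · rintro ⟨⟨hk'1, hk'2⟩, hmain, hdyck⟩
    have h0 := hrew (2*k')
    refine ⟨⟨hk'1, by omega⟩, by omega, ?_⟩
    intro m hm
    have h1 := hdyck m hm
    have h2 := hrew m
    omega
  · rintro ⟨⟨hk'1, hk'2⟩, hmain, hdyck⟩
    have h0 := hrew (2*k')
    refine ⟨⟨hk'1, by omega⟩, by omega, ?_⟩
    intro m hm
    have h1 := hdyck m hm
    have h2 := hrew m
    omega

lemma Kbot (t : Fin (2*n)) (ht1 : 1 ≤ (t:ℕ)) (ht2 : (t:ℕ) ≤ 2*k-2) :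
    KSet n D t = KSet (k-1) (Db n k D) ⟨(t:ℕ)-1, by omega⟩ ∧
      uOf n D t = uOf (k-1) (Db n k D) ⟨(t:ℕ)-1, by omega⟩ := by
  have hval : ((⟨(t:ℕ)-1, by omega⟩ : Fin (2*(k-1))) : ℕ) = (t:ℕ)-1 := rfl
  have hrel := Lbot hk1 hkn hD ((t:ℕ)-1) (by omega)
  rw [show (t:ℕ)-1+1 = (t:ℕ) by omega] at hrel
  have hble : ncf (ext (k-1) (Db n k D)) ((t:ℕ)-1) ≤ (t:ℕ)-1 := ncf_le _ _
  constructor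
  · apply Finset.ext
    intro k'
    rw [mem_KSet_iff', mem_KSet_iff', hval]
    have h := condbot hk1 hkn hD ((t:ℕ)-1) k' (by omega)
    rw [show (t:ℕ)-1+1 = (t:ℕ) by omega] at h
    exact h
  · simp only [uOf, northCount_eq, hval]
    omega

lemma Ktop (t : Fin (2*n)) (ht : 2*k ≤ (t:ℕ)) :
    KSet n D t = KSet (n-k) (Dt n k D) ⟨(t:ℕ)-2*k, by have := t.isLt; omega⟩ ∧
      uOf n D t = uOf (n-k) (Dt n k D) ⟨(t:ℕ)-2*k, by have := t.isLt; omega⟩ + k := by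
  have h2n := t.isLt
  have hval : ((⟨(t:ℕ)-2*k, by omega⟩ : Fin (2*(n-k))) : ℕ) = (t:ℕ)-2*k := rfl
  have hrel := Ltop hk1 hkn hD ((t:ℕ)-2*k)
  rw [show (t:ℕ)-2*k+2*k = (t:ℕ) by omega] at hrel
  have hble : ncf (ext (n-k) (Dt n k D)) ((t:ℕ)-2*k) ≤ (t:ℕ)-2*k := ncf_le _ _
  constructor
  · apply Finset.ext
    intro k'
    rw [mem_KSet_iff', mem_KSet_iff', hval]
    have h := condtop hk1 hkn hD ((t:ℕ)-2*k) k'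
    rw [show (t:ℕ)-2*k+2*k = (t:ℕ) by omega] at h
    exact h
  · simp only [uOf, northCount_eq, hval]
    omega

end


lemma max_unbot'_eq (s : Finset ℕ) (a : ℕ) (h : a ∈ s) (hle : ∀ b ∈ s, b ≤ a) :
    WithBot.unbotD 0 s.max = a := by
  have h1 : s.max = (a : WithBot ℕ) :=
    le_antisymm (Finset.max_le (fun b hb => WithBot.coe_le_coe.mpr (hle b hb))) (Finset.le_max h)
  rw [h1]; rfl

lemma min_untop'_eq (s : Finset ℕ) (a : ℕ) (h : a ∈ s) (hle : ∀ b ∈ s, a ≤ b) :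
    WithTop.untopD 0 s.min = a := by
  have h1 : s.min = (a : WithTop ℕ) :=
    le_antisymm (Finset.min_le h) (Finset.le_min (fun b hb => WithTop.coe_le_coe.mpr (hle b hb)))
  rw [h1]; rfl

section
variable {n k : ℕ} {D : Fin (2*n) → Bool}
variable (hk1 : 1 ≤ k) (hkn : k ≤ n) (hD : InDnk n k D)
include hk1 hkn hD

lemma K0 (hn : 0 < 2*n) :
    dOf n D ⟨0, hn⟩ = n ∧ iOf n D ⟨0, hn⟩ = k ∧ uOf n D ⟨0, hn⟩ = 0 := by
  have hnc0 : ncf (ext n D) 0 = 0 := ncf_zero _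
  have hmem : ∀ k', k' ∈ KSet n D ⟨0, hn⟩ ↔
      (1 ≤ k' ∧ k' ≤ n) ∧ ncf (ext n D) (2*k') = k' := by
    intro k'
    rw [mem_KSet_iff']
    unfold Kcond
    rw [show ((⟨0, hn⟩ : Fin (2*n)) : ℕ) = 0 from rfl, hnc0]
    simp only [Nat.zero_add, Nat.sub_zero, Nat.zero_sub, Nat.mul_zero, Nat.add_zero]
    constructor
    · rintro ⟨⟨h1, h2⟩, h3, _⟩
      exact ⟨⟨h1, h2⟩, h3⟩
    · rintro ⟨⟨h1, h2⟩, h3⟩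
      refine ⟨⟨h1, h2⟩, h3, ?_⟩
      intro m hm
      exact hDyck hD m (by omega)
  have hkmem : k ∈ KSet n D ⟨0, hn⟩ := (hmem k).mpr ⟨⟨hk1, hkn⟩, h2k hD⟩
  have hnmem : n ∈ KSet n D ⟨0, hn⟩ := (hmem n).mpr ⟨⟨by omega, le_rfl⟩, hnc2n hD⟩
  refine ⟨?_, ?_, ?_⟩
  · apply max_unbot'_eq _ _ hnmem
    intro b hb
    exact ((hmem b).mp hb).1.2
  · apply min_untop'_eq _ _ hkmem
    intro b hb
    obtain ⟨⟨hb1, hb2⟩, hb3⟩ := (hmem b).mp hb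
    by_contra hc
    exact hD.2.2 b hb1 (by omega) (by rw [northCount_eq]; exact hb3)
  · simp [uOf]

end

lemma Gamma'_shift (d i u c : ℕ) (x : ℕ → ℝ) :
    Gamma' d i (u + c) x = Gamma' d i u (fun j => x (j + c)) := by
  unfold Gamma'
  congr 1
  apply Finset.sum_congr rfl
  intro j _
  rw [← Nat.add_assoc]


set_option maxHeartbeats 1000000 in
theorem gammaPrime_decomposition
    (n k : ℕ) (hk1 : 1 ≤ k) (hkn : k ≤ n)
    (D : Fin (2*n) → Bool) (hD : InDnk n k D) (x : ℕ → ℝ) :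
    GammaPrimeD n D x =
      Gamma' n k 0 x * GammaPrimeD (k-1) (Db n k D) x *
        GammaPrimeD (n-k) (Dt n k D) (fun j => x (j + k)) := by
  have hn2 : 0 < 2*n := by omega
  obtain ⟨hd0, hi0, hu0⟩ := K0 hk1 hkn hD hn2
  have hDfalse : ∀ t : Fin (2*n), (t:ℕ) = 2*k-1 → D t = false := by
    intro t ht
    have h := hE2k1 hk1 hkn hD
    have h2 : ext n D (2*k-1) = D t := by
      rw [ext, dif_pos (show 2*k-1 < 2*n by omega)]
      congr 1
      exact Fin.ext ht.symm
    rw [← h2, h]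
  have hD0 : D ⟨0, hn2⟩ = true := by
    have h := hE0 hk1 hkn hD
    rw [ext, dif_pos hn2] at h
    exact h
  set f : Fin (2*n) → ℝ := fun t => Gamma' (dOf n D t) (iOf n D t) (uOf n D t) x with hf
  set S : Finset (Fin (2*n)) := Finset.univ.filter (fun t => D t = true) with hS
  have hsplit :
      GammaPrimeD n D x
        = (∏ t ∈ S.filter (fun (t : Fin (2*n)) => (t:ℕ) = 0), f t) *
          ((∏ t ∈ (S.filter (fun (t : Fin (2*n)) => ¬(t:ℕ) = 0)).filter (fun (t : Fin (2*n)) => (t:ℕ) < 2*k), f t) *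
           (∏ t ∈ (S.filter (fun (t : Fin (2*n)) => ¬(t:ℕ) = 0)).filter (fun (t : Fin (2*n)) => ¬(t:ℕ) < 2*k), f t)) := by
    rw [Finset.prod_filter_mul_prod_filter_not, Finset.prod_filter_mul_prod_filter_not]
    rfl
  have hpiece0 : (∏ t ∈ S.filter (fun (t : Fin (2*n)) => (t:ℕ) = 0), f t) = Gamma' n k 0 x := by
    have hset : S.filter (fun (t : Fin (2*n)) => (t:ℕ) = 0) = {(⟨0, hn2⟩ : Fin (2*n))} := by
      apply Finset.ext
      intro t
      simp only [Finset.mem_filter, Finset.mem_singleton, hS, Finset.mem_univ, true_and]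
      constructor
      · rintro ⟨_, h0⟩; exact Fin.ext h0
      · rintro rfl; exact ⟨hD0, rfl⟩
    rw [hset, Finset.prod_singleton, hf]
    simp only
    rw [hd0, hi0, hu0]
  have hpieceB :
      (∏ t ∈ (S.filter (fun (t : Fin (2*n)) => ¬(t:ℕ) = 0)).filter (fun (t : Fin (2*n)) => (t:ℕ) < 2*k), f t)
        = GammaPrimeD (k-1) (Db n k D) x := by
    have hmemB : ∀ t : Fin (2*n), t ∈ (S.filter (fun (t : Fin (2*n)) => ¬(t:ℕ) = 0)).filter (fun (t : Fin (2*n)) => (t:ℕ) < 2*k) ↔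
        (D t = true ∧ 1 ≤ (t:ℕ) ∧ (t:ℕ) ≤ 2*k-2) := by
      intro t
      simp only [Finset.mem_filter, hS, Finset.mem_univ, true_and]
      constructor
      · rintro ⟨⟨hDt, h0⟩, hlt⟩
        refine ⟨hDt, by omega, ?_⟩
        by_contra hc
        have hc2 : (t:ℕ) = 2*k-1 := by omega
        rw [hDfalse t hc2] at hDt
        exact absurd hDt (by simp)
      · rintro ⟨hDt, h1, h2⟩
        exact ⟨⟨hDt, by omega⟩, by omega⟩
    unfold GammaPrimeD
    refine Finset.prod_bij'
      (fun t ht => (⟨(t:ℕ)-1, by have := (hmemB t).mp ht; omega⟩ : Fin (2*(k-1))))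
      (fun s _ => (⟨(s:ℕ)+1, by have := s.isLt; omega⟩ : Fin (2*n)))
      ?_ ?_ ?_ ?_ ?_
    · intro t ht
      obtain ⟨hDt, h1, h2⟩ := (hmemB t).mp ht
      simp only [Finset.mem_filter, Finset.mem_univ, true_and]
      simp only [Db]
      rw [dif_pos (show (t:ℕ)-1+1 < 2*n by omega)]
      have heq : (⟨(t:ℕ)-1+1, show (t:ℕ)-1+1 < 2*n by omega⟩ : Fin (2*n)) = t :=
        Fin.ext (show (t:ℕ)-1+1 = (t:ℕ) by omega)
      rw [heq]
      exact hDt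
    · intro s hs
      simp only [Finset.mem_filter, Finset.mem_univ, true_and] at hs
      simp only [Db] at hs
      rw [dif_pos (show (s:ℕ)+1 < 2*n by have := s.isLt; omega)] at hs
      apply (hmemB _).mpr
      have hlt := s.isLt
      refine ⟨hs, ?_, ?_⟩
      · show 1 ≤ (s:ℕ)+1
        omega
      · show (s:ℕ)+1 ≤ 2*k-2
        omega
    · intro t ht
      obtain ⟨_, h1, _⟩ := (hmemB t).mp ht
      apply Fin.ext
      show (t:ℕ)-1+1 = (t:ℕ)
      omega
    · intro s hs
      apply Fin.ext
      show (s:ℕ)+1-1 = (s:ℕ)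
      omega
    · intro t ht
      obtain ⟨hDt, h1, h2⟩ := (hmemB t).mp ht
      obtain ⟨hK, hu⟩ := Kbot hk1 hkn hD t h1 h2
      show Gamma' (dOf n D t) (iOf n D t) (uOf n D t) x = _
      simp only [dOf, iOf]
      rw [hK, hu]
  have hpieceT :
      (∏ t ∈ (S.filter (fun (t : Fin (2*n)) => ¬(t:ℕ) = 0)).filter (fun (t : Fin (2*n)) => ¬(t:ℕ) < 2*k), f t)
        = GammaPrimeD (n-k) (Dt n k D) (fun j => x (j + k)) := by
    have hmemT : ∀ t : Fin (2*n), t ∈ (S.filter (fun (t : Fin (2*n)) => ¬(t:ℕ) = 0)).filter (fun (t : Fin (2*n)) => ¬(t:ℕ) < 2*k) ↔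
        (D t = true ∧ 2*k ≤ (t:ℕ)) := by
      intro t
      simp only [Finset.mem_filter, hS, Finset.mem_univ, true_and]
      constructor
      · rintro ⟨⟨hDt, h0⟩, hlt⟩
        exact ⟨hDt, by omega⟩
      · rintro ⟨hDt, h1⟩
        exact ⟨⟨hDt, by omega⟩, by omega⟩
    unfold GammaPrimeD
    refine Finset.prod_bij'
      (fun t ht => (⟨(t:ℕ)-2*k, by
        have := (hmemT t).mp ht; have := t.isLt; omega⟩ : Fin (2*(n-k))))
      (fun s _ => (⟨(s:ℕ)+2*k, by have := s.isLt; omega⟩ : Fin (2*n)))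
      ?_ ?_ ?_ ?_ ?_
    · intro t ht
      obtain ⟨hDt, h1⟩ := (hmemT t).mp ht
      have hlt := t.isLt
      simp only [Finset.mem_filter, Finset.mem_univ, true_and]
      simp only [Dt]
      rw [dif_pos (show (t:ℕ)-2*k+2*k < 2*n by omega)]
      have heq : (⟨(t:ℕ)-2*k+2*k, show (t:ℕ)-2*k+2*k < 2*n by omega⟩ : Fin (2*n)) = t :=
        Fin.ext (show (t:ℕ)-2*k+2*k = (t:ℕ) by omega)
      rw [heq]
      exact hDt
    · intro s hs
      simp only [Finset.mem_filter, Finset.mem_univ, true_and] at hs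
      simp only [Dt] at hs
      rw [dif_pos (show (s:ℕ)+2*k < 2*n by have := s.isLt; omega)] at hs
      apply (hmemT _).mpr
      refine ⟨hs, ?_⟩
      show 2*k ≤ (s:ℕ)+2*k
      omega
    · intro t ht
      obtain ⟨_, h1⟩ := (hmemT t).mp ht
      apply Fin.ext
      show (t:ℕ)-2*k+2*k = (t:ℕ)
      omega
    · intro s hs
      apply Fin.ext
      show (s:ℕ)+2*k-2*k = (s:ℕ)
      omega
    · intro t ht
      obtain ⟨hDt, h1⟩ := (hmemT t).mp ht
      obtain ⟨hK, hu⟩ := Ktop hk1 hkn hD t h1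
      show Gamma' (dOf n D t) (iOf n D t) (uOf n D t) x = _
      simp only [dOf, iOf]
      rw [hK, hu, Gamma'_shift]
  rw [hsplit, hpiece0, hpieceB, hpieceT, mul_assoc]


end
end

section
/- For every n ≥ 1, every dominant λ ∈ E and every 1 ≤ i ≤ n: (x, ϖ_i) ≤ (λ, ϖ_i) for all x ∈ P_n(λ), and P_n(λ) ∩ {x ∈ E : (x, ϖ_i) = (λ, ϖ_i)} = conv(W_{S∖{s_i}}·λ). That is, the affine hyperplane through λ with normal ϖ_i is a supporting hyperplane of the permutohedron, and the resulting exposed face is F^{s_i}(λ) = conv(W_{S∖{s_i}}·λ). -/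
open scoped RealInnerProductSpace
open MeasureTheory

attribute [local instance 0] Classical.propDecidable

noncomputable section

-- ======================= auxiliary lemmas =========================

namespace PermAux

variable {n : ℕ}

lemma varpiWt_apply (n i : ℕ) (t : Fin (n+1)) :
    varpiWt n i t = (if (t : ℕ) < i then (1:ℝ) else 0) - (i : ℝ) / (n+1) := rfl

lemma permAct_apply {m : ℕ} (w : Equiv.Perm (Fin m)) (v : EuclideanSpace ℝ (Fin m)) (t : Fin m) :
    permAct w v t = v (w⁻¹ t) := rfl

lemma permAct_one {m : ℕ} (v : EuclideanSpace ℝ (Fin m)) : permAct 1 v = v := rfl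

lemma sum_permAct {m : ℕ} (w : Equiv.Perm (Fin m)) (v : EuclideanSpace ℝ (Fin m)) :
    ∑ t, permAct w v t = ∑ t, v t := Equiv.sum_comp w⁻¹ v

lemma inner_eq (y z : EuclideanSpace ℝ (Fin (n+1))) :
    (inner ℝ y z : ℝ) = ∑ t, y t * z t := by
  rw [PiLp.inner_apply]; simp [RCLike.inner_apply, mul_comm]

/-- `TT n i` : the first `i` coordinates. -/
def TT (n i : ℕ) : Finset (Fin (n+1)) := Finset.univ.filter (fun t : Fin (n+1) => (t:ℕ) < i)

lemma card_TT (i : ℕ) (hi : i ≤ n) : (TT n i).card = i := by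
  have : TT n i = Finset.Iio (⟨i, by omega⟩ : Fin (n+1)) := by
    ext t
    simp [TT, Fin.lt_def]
  rw [this, Fin.card_Iio]

lemma inner_permAct_varpi (i : ℕ) (v : EuclideanSpace ℝ (Fin (n+1)))
    (hv : ∑ t, v t = 0) (w : Equiv.Perm (Fin (n+1))) :
    (inner ℝ (permAct w v) (varpiWt n i) : ℝ)
      = ∑ s ∈ Finset.univ.filter (fun s : Fin (n+1) => ((w s : Fin (n+1)) : ℕ) < i), v s := by
  rw [inner_eq]
  have h1 : ∀ t : Fin (n+1), permAct w v t * varpiWt n i t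
      = v (w⁻¹ t) * ((if (t : ℕ) < i then (1:ℝ) else 0) - (i : ℝ) / (n+1)) := fun t => rfl
  simp only [h1]
  have h2 := Equiv.sum_comp w
    (fun t : Fin (n+1) => v (w⁻¹ t) * ((if (t : ℕ) < i then (1:ℝ) else 0) - (i : ℝ) / (n+1)))
  rw [← h2]
  rw [Finset.sum_filter]
  have h4 : ∀ x : Fin (n+1),
      v (w⁻¹ (w x)) * ((if ((w x : Fin (n+1)):ℕ) < i then (1:ℝ) else 0) - (i:ℝ)/(n+1))
      = (if ((w x : Fin (n+1)):ℕ) < i then v x else 0) - v x * ((i:ℝ)/(n+1)) := by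
    intro x
    rw [Equiv.Perm.coe_inv, Equiv.symm_apply_apply]
    by_cases h : ((w x : Fin (n+1)):ℕ) < i <;> simp [h, mul_sub]
  simp only [h4]
  rw [Finset.sum_sub_distrib, ← Finset.sum_mul, hv, zero_mul, sub_zero]

lemma inner_varpi_of_sum_zero (i : ℕ) (v : EuclideanSpace ℝ (Fin (n+1)))
    (hv : ∑ t, v t = 0) :
    (inner ℝ v (varpiWt n i) : ℝ) = ∑ s ∈ TT n i, v s := by
  have := inner_permAct_varpi (n := n) i v hv 1
  convert this using 2
  · rfl
  · ext t
    unfold TT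
    rw [Finset.mem_filter, Finset.mem_filter]
    exact Iff.rfl

lemma sum_apply_eucl {m : ℕ} (s : Finset ℕ) (f : ℕ → EuclideanSpace ℝ (Fin m)) (t : Fin m) :
    (∑ j ∈ s, f j) t = ∑ j ∈ s, f j t := by
  induction s using Finset.induction_on with
  | empty => rfl
  | insert _ _ h ih => rw [Finset.sum_insert h, Finset.sum_insert h, ← ih]; rfl

lemma lam_apply_formula (x : ℕ → ℝ) (t : Fin (n+1)) :
    (∑ j ∈ Finset.Icc 1 n, x j • varpiWt n j) t
      = ∑ j ∈ Finset.Icc 1 n, x j * ((if (t:ℕ) < j then (1:ℝ) else 0) - (j:ℝ)/(n+1)) := by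
  rw [sum_apply_eucl]
  exact Finset.sum_congr rfl fun j _ => rfl

lemma lam_antitone (x : ℕ → ℝ) (hx : ∀ j ∈ Finset.Icc 1 n, 0 ≤ x j)
    (s t : Fin (n+1)) (hst : (s:ℕ) ≤ (t:ℕ)) :
    (∑ j ∈ Finset.Icc 1 n, x j • varpiWt n j) t ≤ (∑ j ∈ Finset.Icc 1 n, x j • varpiWt n j) s := by
  rw [lam_apply_formula, lam_apply_formula]
  apply Finset.sum_le_sum
  intro j hj
  have hxj := hx j hj
  apply mul_le_mul_of_nonneg_left _ hxj
  apply sub_le_sub_right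
  by_cases h1 : (t:ℕ) < j
  · have h2 : (s:ℕ) < j := by omega
    simp [h1, h2]
  · by_cases h2 : (s:ℕ) < j <;> simp [h1, h2]

lemma lam_sum_zero (x : ℕ → ℝ) :
    ∑ t, (∑ j ∈ Finset.Icc 1 n, x j • varpiWt n j) t = 0 := by
  have h1 : ∀ t : Fin (n+1), (∑ j ∈ Finset.Icc 1 n, x j • varpiWt n j) t
      = ∑ j ∈ Finset.Icc 1 n, x j * ((if (t:ℕ) < j then (1:ℝ) else 0) - (j:ℝ)/(n+1)) :=
    lam_apply_formula x
  simp only [h1]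
  rw [Finset.sum_comm]
  apply Finset.sum_eq_zero
  intro j hj
  rw [← Finset.mul_sum]
  apply mul_eq_zero_of_right
  have hjn : j ≤ n := (Finset.mem_Icc.mp hj).2
  rw [Finset.sum_sub_distrib]
  have h2 : ∑ t : Fin (n+1), (if (t:ℕ) < j then (1:ℝ) else 0) = j := by
    rw [Fin.sum_univ_eq_sum_range (fun k => if k < j then (1:ℝ) else 0) (n+1)]
    rw [Finset.sum_boole]
    have : (Finset.range (n+1)).filter (fun k => k < j) = Finset.range j := by
      ext k; simp; omega
    rw [this, Finset.card_range]
  rw [h2, Finset.sum_const, Finset.card_univ, Fintype.card_fin, nsmul_eq_mul]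
  have hne : ((n:ℝ)+1) ≠ 0 := by positivity
  field_simp
  push_cast; ring

lemma card_filter_perm (i : ℕ) (hi : i ≤ n) (w : Equiv.Perm (Fin (n+1))) :
    (Finset.univ.filter (fun s : Fin (n+1) => ((w s : Fin (n+1)) : ℕ) < i)).card = i := by
  have hbij : (Finset.univ.filter (fun s : Fin (n+1) => ((w s : Fin (n+1)) : ℕ) < i)).card
      = (TT n i).card := by
    apply Finset.card_bij' (fun s _ => w s) (fun t _ => w⁻¹ t)
    · intro s hs
      simp only [TT, Finset.mem_filter, Finset.mem_univ, true_and] at hs ⊢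
      exact hs
    · intro t ht
      simp only [TT, Finset.mem_filter, Finset.mem_univ, true_and] at ht ⊢
      simpa using ht
    · intro s _; simp
    · intro t _; simp
  rw [hbij, card_TT i hi]

lemma sum_TT_core (lam : EuclideanSpace ℝ (Fin (n+1)))
    (hmono : ∀ s t : Fin (n+1), (s:ℕ) ≤ (t:ℕ) → lam t ≤ lam s)
    (i : ℕ) (hi1 : 1 ≤ i) (hin : i ≤ n) (A : Finset (Fin (n+1))) (hA : A.card = i) :
    (∑ s ∈ A, lam s ≤ ∑ t ∈ TT n i, lam t) ∧
    (∑ s ∈ A, lam s = ∑ t ∈ TT n i, lam t →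
       ∀ z : Fin (n+1), (z ∈ TT n i \ A ∨ z ∈ A \ TT n i) →
         lam z = lam (⟨i-1, by omega⟩ : Fin (n+1))) := by
  set p : Fin (n+1) := ⟨i-1, by omega⟩ with hp
  set B := TT n i \ A with hB
  set C := A \ TT n i with hC
  have hTcard := card_TT (n := n) i hin
  have hc1 := Finset.card_sdiff_add_card_inter (TT n i) A
  have hc2 := Finset.card_sdiff_add_card_inter A (TT n i)
  have hinter : (TT n i ∩ A).card = (A ∩ TT n i).card := by rw [Finset.inter_comm]
  have hcard : B.card = C.card := by rw [hB, hC]; omega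
  have hBp : ∀ b ∈ B, lam p ≤ lam b := by
    intro b hb
    have hbT : b ∈ TT n i := (Finset.mem_sdiff.mp hb).1
    have : (b:ℕ) < i := (Finset.mem_filter.mp hbT).2
    exact hmono b p (by simp [hp]; omega)
  have hCp : ∀ c ∈ C, lam c ≤ lam p := by
    intro c hc
    have hcT : c ∉ TT n i := (Finset.mem_sdiff.mp hc).2
    have : ¬ (c:ℕ) < i := fun h => hcT (Finset.mem_filter.mpr ⟨Finset.mem_univ _, h⟩)
    exact hmono p c (by simp [hp]; omega)
  have key1 : ∑ c ∈ C, lam c ≤ (C.card : ℝ) * lam p := by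
    have := Finset.sum_le_card_nsmul C lam (lam p) hCp
    rwa [nsmul_eq_mul] at this
  have key2 : (B.card : ℝ) * lam p ≤ ∑ b ∈ B, lam b := by
    have := Finset.card_nsmul_le_sum B lam (lam p) hBp
    rwa [nsmul_eq_mul] at this
  have hsplit1 : ∑ x_1 ∈ TT n i ∩ A, lam x_1 + ∑ x_1 ∈ B, lam x_1 = ∑ x_1 ∈ TT n i, lam x_1 :=
    Finset.sum_inter_add_sum_sdiff _ _ _
  have hsplit2 : ∑ x_1 ∈ A ∩ TT n i, lam x_1 + ∑ x_1 ∈ C, lam x_1 = ∑ x_1 ∈ A, lam x_1 :=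
    Finset.sum_inter_add_sum_sdiff _ _ _
  have hiAB : ∑ x_1 ∈ TT n i ∩ A, lam x_1 = ∑ x_1 ∈ A ∩ TT n i, lam x_1 := by
    rw [Finset.inter_comm]
  have hcardR : (B.card : ℝ) = (C.card : ℝ) := by exact_mod_cast hcard
  rw [← hcardR] at key1
  constructor
  · linarith
  · intro heq z hz
    have hBC : ∑ b ∈ B, lam b = ∑ c ∈ C, lam c := by linarith
    have hBsum : ∑ b ∈ B, lam b = (B.card : ℝ) * lam p := by linarith
    have hCsum : ∑ c ∈ C, lam c = (C.card : ℝ) * lam p := by rw [← hcardR]; linarith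
    have hBz : ∀ b ∈ B, lam b = lam p := by
      have hz0 : ∑ b ∈ B, (lam b - lam p) = 0 := by
        rw [Finset.sum_sub_distrib, Finset.sum_const, nsmul_eq_mul, hBsum]; ring
      have := (Finset.sum_eq_zero_iff_of_nonneg
        (fun b hb => sub_nonneg.mpr (hBp b hb))).mp hz0
      intro b hb
      have := this b hb
      linarith [this]
    have hCz : ∀ c ∈ C, lam c = lam p := by
      have hz0 : ∑ c ∈ C, (lam p - lam c) = 0 := by
        rw [Finset.sum_sub_distrib, Finset.sum_const, nsmul_eq_mul, hCsum]; ring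
      have := (Finset.sum_eq_zero_iff_of_nonneg
        (fun c hc => sub_nonneg.mpr (hCp c hc))).mp hz0
      intro c hc
      have := this c hc
      linarith [this]
    rcases hz with hzB | hzC
    · exact hBz z hzB
    · exact hCz z hzC

lemma swap_side {i : ℕ} (a b z : Fin (n+1)) (hab : ((a:ℕ) < i ↔ (b:ℕ) < i)) :
    ((Equiv.swap a b z : Fin (n+1)):ℕ) < i ↔ (z:ℕ) < i := by
  rcases eq_or_ne z a with rfl | ha
  · rw [Equiv.swap_apply_left]; exact hab.symm
  · rcases eq_or_ne z b with rfl | hb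
    · rw [Equiv.swap_apply_right]; exact hab
    · rw [Equiv.swap_apply_of_ne_of_ne ha hb]

lemma swap_mem_WJ (i : ℕ) (hi1 : 1 ≤ i) (hin : i ≤ n) :
    ∀ k (a b : Fin (n+1)), (b:ℕ) - (a:ℕ) ≤ k → (a:ℕ) < (b:ℕ) → ((a:ℕ) < i ↔ (b:ℕ) < i) →
      Equiv.swap a b ∈ WJ n (Set.Icc 1 n \ {i}) := by
  intro k
  induction k with
  | zero => intro a b h1 h2 _; omega
  | succ k ih =>
    intro a b h1 h2 hside
    have hbn : (b:ℕ) ≤ n := by omega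
    by_cases hadj : (b:ℕ) = (a:ℕ) + 1
    · have hcond : 1 ≤ (b:ℕ) ∧ (b:ℕ) ≤ n := ⟨by omega, hbn⟩
      have hbi : (b:ℕ) ≠ i := by omega
      have hEq : Equiv.swap a b = sRefl n (b:ℕ) := by
        rw [sRefl, dif_pos hcond,
          show (⟨(b:ℕ)-1, by omega⟩ : Fin (n+1)) = a from Fin.ext (by simp; omega),
          show (⟨(b:ℕ), by omega⟩ : Fin (n+1)) = b from Fin.ext rfl]
      rw [hEq]
      apply Subgroup.subset_closure
      exact ⟨(b:ℕ), ⟨Set.mem_Icc.mpr ⟨by omega, hbn⟩, hbi⟩, rfl⟩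
    · have hk2 : (a:ℕ) + 2 ≤ (b:ℕ) := by omega
      set c : Fin (n+1) := ⟨(b:ℕ) - 1, by omega⟩ with hcdef
      have hcval : (c:ℕ) = (b:ℕ) - 1 := rfl
      have hac : a ≠ c := fun h => by have : (a:ℕ) = (c:ℕ) := congrArg Fin.val h; omega
      have hab' : a ≠ b := fun h => by have : (a:ℕ) = (b:ℕ) := congrArg Fin.val h; omega
      have e1 : Equiv.swap c b a = a := Equiv.swap_apply_of_ne_of_ne hac hab'
      have e2 : Equiv.swap c b c = b := Equiv.swap_apply_left c b
      have key := Equiv.swap_apply_apply (Equiv.swap c b) a c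
      rw [e1, e2] at key
      rw [key]
      have hcb : Equiv.swap c b ∈ WJ n (Set.Icc 1 n \ {i}) :=
        ih c b (by omega) (by omega) (by omega)
      have hac2 : Equiv.swap a c ∈ WJ n (Set.Icc 1 n \ {i}) :=
        ih a c (by omega) (by omega) (by omega)
      exact mul_mem (mul_mem hcb hac2) (inv_mem hcb)

lemma iff_of_forward (i : ℕ) (hin : i ≤ n) (f : Equiv.Perm (Fin (n+1)))
    (hf : ∀ t : Fin (n+1), (t:ℕ) < i → ((f t : Fin (n+1)):ℕ) < i) :
    ∀ t : Fin (n+1), ((f t : Fin (n+1)):ℕ) < i ↔ (t:ℕ) < i := by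
  classical
  set T : Finset (Fin (n+1)) := Finset.univ.filter (fun t : Fin (n+1) => (t:ℕ) < i) with hT
  have himg : T.image f ⊆ T := by
    intro y hy
    obtain ⟨t, ht, rfl⟩ := Finset.mem_image.mp hy
    simp only [hT, Finset.mem_filter, Finset.mem_univ, true_and] at ht ⊢
    exact hf t ht
  have hcardim : (T.image f).card = T.card := Finset.card_image_of_injective _ f.injective
  have heq : T.image f = T := Finset.eq_of_subset_of_card_le himg (le_of_eq hcardim.symm)
  intro t
  constructor
  · intro h
    have hft : f t ∈ T := by
      simp only [hT, Finset.mem_filter, Finset.mem_univ, true_and]; exact h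
    rw [← heq] at hft
    obtain ⟨s, hs, hfs⟩ := Finset.mem_image.mp hft
    have := f.injective hfs
    subst this
    simpa [hT] using hs
  · exact hf t

lemma mem_WJ_of_iff (i : ℕ) (hi1 : 1 ≤ i) (hin : i ≤ n) (f : Equiv.Perm (Fin (n+1)))
    (hf : ∀ t : Fin (n+1), ((f t : Fin (n+1)):ℕ) < i ↔ (t:ℕ) < i) :
    f ∈ WJ n (Set.Icc 1 n \ {i}) := by
  generalize hN : f.support.card = N
  induction N using Nat.strong_induction_on generalizing f with
  | _ N ihN =>
    by_cases h1 : f = 1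
    · rw [h1]; exact one_mem _
    · have : ∃ a, f a ≠ a := by
        by_contra hcon
        push_neg at hcon
        exact h1 (Equiv.ext hcon)
      obtain ⟨a, ha⟩ := this
      have hb := hf a
      have havne : (a:ℕ) ≠ ((f a : Fin (n+1)):ℕ) := fun h => ha (Fin.ext h.symm)
      have hswap : Equiv.swap a (f a) ∈ WJ n (Set.Icc 1 n \ {i}) := by
        rcases lt_or_gt_of_ne havne with hlt | hgt
        · exact swap_mem_WJ i hi1 hin (((f a):ℕ) - (a:ℕ)) a (f a) le_rfl hlt hb.symm
        · rw [Equiv.swap_comm]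
          exact swap_mem_WJ i hi1 hin ((a:ℕ) - ((f a):ℕ)) (f a) a le_rfl hgt hb
      have hcard := Equiv.Perm.card_support_swap_mul ha
      set g := Equiv.swap a (f a) * f with hg
      have hgiff : ∀ t : Fin (n+1), ((g t : Fin (n+1)):ℕ) < i ↔ (t:ℕ) < i := by
        intro t
        have : g t = Equiv.swap a (f a) (f t) := rfl
        rw [this, swap_side a (f a) (f t) hb.symm]
        exact hf t
      have hgmem : g ∈ WJ n (Set.Icc 1 n \ {i}) :=
        ihN g.support.card (hN ▸ hcard) g hgiff rfl
      have hfg : f = Equiv.swap a (f a) * g := by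
        rw [hg, ← mul_assoc, Equiv.swap_mul_self, one_mul]
      rw [hfg]
      exact mul_mem hswap hgmem

lemma WJ_preserve (i : ℕ) (hi1 : 1 ≤ i) (hin : i ≤ n) (w : Equiv.Perm (Fin (n+1)))
    (hw : w ∈ WJ n (Set.Icc 1 n \ {i})) :
    ∀ t : Fin (n+1), ((w t : Fin (n+1)):ℕ) < i ↔ (t:ℕ) < i := by
  induction hw using Subgroup.closure_induction with
  | mem x hx =>
    obtain ⟨j, ⟨hjIcc, hji⟩, rfl⟩ := hx
    have hj1 : 1 ≤ j := (Set.mem_Icc.mp hjIcc).1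
    have hjn : j ≤ n := (Set.mem_Icc.mp hjIcc).2
    have hji' : j ≠ i := hji
    intro t
    rw [sRefl, dif_pos ⟨hj1, hjn⟩]
    apply swap_side
    simp only []
    omega
  | one => intro t; simp
  | mul x y hx hy hx' hy' =>
    intro t
    have : (x * y) t = x (y t) := rfl
    rw [this]
    exact (hx' (y t)).trans (hy' t)
  | inv x hx hx' =>
    intro t
    have := hx' (x⁻¹ t)
    rw [Equiv.Perm.coe_inv, Equiv.apply_symm_apply] at this
    exact this.symm

lemma exists_WJ_of_eq (i : ℕ) (hi1 : 1 ≤ i) (hin : i ≤ n)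
    (lam : EuclideanSpace ℝ (Fin (n+1)))
    (hmono : ∀ s t : Fin (n+1), (s:ℕ) ≤ (t:ℕ) → lam t ≤ lam s)
    (w : Equiv.Perm (Fin (n+1)))
    (hAeq : ∑ s ∈ Finset.univ.filter (fun s : Fin (n+1) => ((w s : Fin (n+1)):ℕ) < i), lam s
      = ∑ t ∈ TT n i, lam t) :
    ∃ w' ∈ WJ n (Set.Icc 1 n \ {i}), permAct w' lam = permAct w lam := by
  classical
  set p : Fin (n+1) := ⟨i-1, by omega⟩ with hp
  set A : Finset (Fin (n+1)) :=
    Finset.univ.filter (fun s : Fin (n+1) => ((w s : Fin (n+1)):ℕ) < i) with hA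
  have hAcard : A.card = i := card_filter_perm i hin w
  have hvals := (sum_TT_core lam hmono i hi1 hin A hAcard).2 hAeq
  set B : Finset (Fin (n+1)) := TT n i \ A with hB
  set C : Finset (Fin (n+1)) := A \ TT n i with hC
  have hTcard := card_TT (n := n) i hin
  have hc1 := Finset.card_sdiff_add_card_inter (TT n i) A
  have hc2 := Finset.card_sdiff_add_card_inter A (TT n i)
  have hinter : (TT n i ∩ A).card = (A ∩ TT n i).card := by rw [Finset.inter_comm]
  have hcard : B.card = C.card := by rw [hB, hC]; omega
  set e := Finset.equivOfCardEq hcard with he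
  have hdisj : ∀ z : Fin (n+1), z ∈ B → z ∈ C → False := by
    intro z h1 h2
    exact (Finset.mem_sdiff.mp h1).2 (Finset.mem_sdiff.mp h2).1
  set tf : Fin (n+1) → Fin (n+1) := fun z =>
    if hz : z ∈ B then ((e ⟨z, hz⟩ : {x // x ∈ C}) : Fin (n+1))
    else if hz' : z ∈ C then ((e.symm ⟨z, hz'⟩ : {x // x ∈ B}) : Fin (n+1))
    else z with htf
  have htfB : ∀ z (hz : z ∈ B), tf z = ((e ⟨z, hz⟩ : {x // x ∈ C}) : Fin (n+1)) := by
    intro z hz; rw [htf]; exact dif_pos hz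
  have htfC : ∀ z (hz : z ∈ C), tf z = ((e.symm ⟨z, hz⟩ : {x // x ∈ B}) : Fin (n+1)) := by
    intro z hz
    have hzB : z ∉ B := fun h => hdisj z h hz
    rw [htf]; simp only []
    rw [dif_neg hzB, dif_pos hz]
  have htfO : ∀ z, z ∉ B → z ∉ C → tf z = z := by
    intro z h1 h2; rw [htf]; simp only []; rw [dif_neg h1, dif_neg h2]
  have hinv : Function.Involutive tf := by
    intro z
    by_cases hz : z ∈ B
    · rw [htfB z hz]
      have hmC : ((e ⟨z, hz⟩ : {x // x ∈ C}) : Fin (n+1)) ∈ C := (e ⟨z, hz⟩).2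
      rw [htfC _ hmC]
      have : (⟨((e ⟨z, hz⟩ : {x // x ∈ C}) : Fin (n+1)), hmC⟩ : {x // x ∈ C}) = e ⟨z, hz⟩ :=
        Subtype.ext rfl
      rw [this, Equiv.symm_apply_apply]
    · by_cases hz' : z ∈ C
      · rw [htfC z hz']
        have hmB : ((e.symm ⟨z, hz'⟩ : {x // x ∈ B}) : Fin (n+1)) ∈ B := (e.symm ⟨z, hz'⟩).2
        rw [htfB _ hmB]
        have : (⟨((e.symm ⟨z, hz'⟩ : {x // x ∈ B}) : Fin (n+1)), hmB⟩ : {x // x ∈ B})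
            = e.symm ⟨z, hz'⟩ := Subtype.ext rfl
        rw [this, Equiv.apply_symm_apply]
      · rw [htfO z hz hz', htfO z hz hz']
  set tau : Equiv.Perm (Fin (n+1)) := hinv.toPerm tf with htau
  have htau_apply : ∀ z, tau z = tf z := fun z => rfl
  have htau_inv : ∀ z, tau⁻¹ z = tf z := fun z => rfl
  have htlam : ∀ z, lam (tf z) = lam z := by
    intro z
    by_cases hz : z ∈ B
    · rw [htfB z hz]
      have hmC : ((e ⟨z, hz⟩ : {x // x ∈ C}) : Fin (n+1)) ∈ C := (e ⟨z, hz⟩).2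
      rw [hvals _ (Or.inr hmC), hvals _ (Or.inl hz)]
    · by_cases hz' : z ∈ C
      · rw [htfC z hz']
        have hmB : ((e.symm ⟨z, hz'⟩ : {x // x ∈ B}) : Fin (n+1)) ∈ B := (e.symm ⟨z, hz'⟩).2
        rw [hvals _ (Or.inl hmB), hvals _ (Or.inr hz')]
      · rw [htfO z hz hz']
  have htA : ∀ z, z ∈ A → tf z ∈ TT n i := by
    intro z hz
    have hzB : z ∉ B := fun h => (Finset.mem_sdiff.mp h).2 hz
    by_cases hz' : z ∈ C
    · rw [htfC z hz']
      have hmB : ((e.symm ⟨z, hz'⟩ : {x // x ∈ B}) : Fin (n+1)) ∈ B := (e.symm ⟨z, hz'⟩).2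
      exact (Finset.mem_sdiff.mp hmB).1
    · rw [htfO z hzB hz']
      by_contra hzT
      exact hz' (Finset.mem_sdiff.mpr ⟨hz, hzT⟩)
  have hfwd : ∀ t : Fin (n+1), (t:ℕ) < i → (((w * tau)⁻¹ t : Fin (n+1)):ℕ) < i := by
    intro t ht
    have h1 : (w * tau)⁻¹ t = tau⁻¹ (w⁻¹ t) := by
      rw [mul_inv_rev]; rfl
    rw [h1, htau_inv]
    have hwA : w⁻¹ t ∈ A := by
      rw [hA]
      simp only [Finset.mem_filter, Finset.mem_univ, true_and, Equiv.Perm.coe_inv, Equiv.apply_symm_apply]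
      exact ht
    have := htA _ hwA
    exact (Finset.mem_filter.mp this).2
  have hiff := iff_of_forward i hin ((w * tau)⁻¹) hfwd
  have hmem : (w * tau)⁻¹ ∈ WJ n (Set.Icc 1 n \ {i}) := mem_WJ_of_iff i hi1 hin _ hiff
  refine ⟨w * tau, by simpa using inv_mem hmem, ?_⟩
  ext t
  have h1 : permAct (w * tau) lam t = lam (tau⁻¹ (w⁻¹ t)) := by
    rw [permAct_apply, mul_inv_rev]; rfl
  rw [h1, htau_inv, htlam]
  rfl

end PermAux

theorem supporting_hyperplane_and_exposed_face
    (n : ℕ) (hn : 1 ≤ n) (x : ℕ → ℝ) (hx : ∀ i ∈ Finset.Icc 1 n, 0 ≤ x i)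
    (i : ℕ) (hi : i ∈ Finset.Icc 1 n)
    (lam : EuclideanSpace ℝ (Fin (n+1)))
    (hlam : lam = ∑ j ∈ Finset.Icc 1 n, x j • varpiWt n j) :
    (∀ y ∈ permutohedron n lam,
        (inner ℝ y (varpiWt n i) : ℝ) ≤ (inner ℝ lam (varpiWt n i) : ℝ)) ∧
      permutohedron n lam ∩
          {y : EuclideanSpace ℝ (Fin (n+1)) | (∑ t, y t) = 0 ∧
            (inner ℝ y (varpiWt n i) : ℝ) = (inner ℝ lam (varpiWt n i) : ℝ)} =
        convexHull ℝ {y | ∃ w ∈ WJ n (Set.Icc 1 n \ {i}), y = permAct w lam} := by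
  classical
  obtain ⟨hi1, hin⟩ := Finset.mem_Icc.mp hi
  have hmono : ∀ s t : Fin (n+1), (s:ℕ) ≤ (t:ℕ) → lam t ≤ lam s := by
    rw [hlam]; exact PermAux.lam_antitone x hx
  have hsum0 : ∑ t, lam t = 0 := by rw [hlam]; exact PermAux.lam_sum_zero x
  have hc : (inner ℝ lam (varpiWt n i) : ℝ) = ∑ t ∈ PermAux.TT n i, lam t :=
    PermAux.inner_varpi_of_sum_zero i lam hsum0
  have hvertex : ∀ w : Equiv.Perm (Fin (n+1)),
      (inner ℝ (permAct w lam) (varpiWt n i) : ℝ) ≤ (inner ℝ lam (varpiWt n i) : ℝ) := by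
    intro w
    rw [PermAux.inner_permAct_varpi i lam hsum0 w, hc]
    exact (PermAux.sum_TT_core lam hmono i hi1 hin _ (PermAux.card_filter_perm i hin w)).1
  have lin1 : IsLinearMap ℝ
      (fun y : EuclideanSpace ℝ (Fin (n+1)) => (inner ℝ y (varpiWt n i) : ℝ)) :=
    ⟨fun a b => inner_add_left a b _, fun r a => real_inner_smul_left a _ r⟩
  have lin2 : IsLinearMap ℝ (fun y : EuclideanSpace ℝ (Fin (n+1)) => ∑ t, y t) := by
    constructor
    · intro a b
      simp only []
      rw [← Finset.sum_add_distrib]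
      exact Finset.sum_congr rfl fun t _ => rfl
    · intro r a
      simp only [smul_eq_mul]
      rw [Finset.mul_sum]
      exact Finset.sum_congr rfl fun t _ => rfl
  have hhalf : permutohedron n lam ⊆
      {y : EuclideanSpace ℝ (Fin (n+1)) |
        (inner ℝ y (varpiWt n i) : ℝ) ≤ (inner ℝ lam (varpiWt n i) : ℝ)} := by
    apply convexHull_min _ (convex_halfSpace_le lin1 _)
    rintro z ⟨w, rfl⟩
    exact hvertex w
  refine ⟨fun y hy => hhalf hy, ?_⟩
  ext y
  constructor
  · rintro ⟨hy, hy0, hyc⟩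
    have hy' : y ∈ convexHull ℝ
        {y : EuclideanSpace ℝ (Fin (n+1)) | ∃ w : Equiv.Perm (Fin (n+1)), y = permAct w lam} :=
      hy
    rw [convexHull_eq] at hy'
    obtain ⟨ι, t, wt, z, h0, h1s, hz, hyeq⟩ := hy'
    have hzex : ∀ j ∈ t, ∃ w : Equiv.Perm (Fin (n+1)), z j = permAct w lam := hz
    choose wfun hwfun using hzex
    have hyin : (inner ℝ y (varpiWt n i) : ℝ)
        = ∑ j ∈ t, wt j * (inner ℝ (z j) (varpiWt n i) : ℝ) := by
      rw [← hyeq, Finset.centerMass_eq_of_sum_1 _ _ h1s, sum_inner]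
      exact Finset.sum_congr rfl fun j hj => real_inner_smul_left _ _ _
    have hterm : ∀ j ∈ t, (inner ℝ (z j) (varpiWt n i) : ℝ) ≤ (inner ℝ lam (varpiWt n i) : ℝ) := by
      intro j hj; rw [hwfun j hj]; exact hvertex _
    have hzero : ∑ j ∈ t,
        wt j * ((inner ℝ lam (varpiWt n i) : ℝ) - (inner ℝ (z j) (varpiWt n i) : ℝ)) = 0 := by
      simp only [mul_sub]
      rw [Finset.sum_sub_distrib, ← Finset.sum_mul, h1s, one_mul, ← hyin, hyc]
      ring
    have hall := (Finset.sum_eq_zero_iff_of_nonneg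
      (fun j hj => mul_nonneg (h0 j hj) (sub_nonneg.mpr (hterm j hj)))).mp hzero
    rw [← Finset.centerMass_filter_ne_zero z] at hyeq
    rw [← hyeq]
    apply Finset.centerMass_mem_convexHull
    · intro j hj; exact h0 j (Finset.mem_filter.mp hj).1
    · rw [Finset.sum_filter_ne_zero, h1s]; norm_num
    · intro j hj
      obtain ⟨hjt, hjne⟩ := Finset.mem_filter.mp hj
      have heqj : (inner ℝ (z j) (varpiWt n i) : ℝ) = (inner ℝ lam (varpiWt n i) : ℝ) := by
        rcases mul_eq_zero.mp (hall j hjt) with h | h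
        · exact absurd h hjne
        · linarith [hterm j hjt]
      have hsumeq : ∑ s ∈ Finset.univ.filter
            (fun s : Fin (n+1) => ((wfun j hjt s : Fin (n+1)):ℕ) < i), lam s
          = ∑ t' ∈ PermAux.TT n i, lam t' := by
        rw [← PermAux.inner_permAct_varpi i lam hsum0 (wfun j hjt), ← hwfun j hjt, heqj, hc]
      obtain ⟨w', hw', hperm⟩ :=
        PermAux.exists_WJ_of_eq i hi1 hin lam hmono (wfun j hjt) hsumeq
      exact ⟨w', hw', by rw [hwfun j hjt, hperm]⟩
  · intro hy
    have hsub1 : {y : EuclideanSpace ℝ (Fin (n+1)) |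
          ∃ w ∈ WJ n (Set.Icc 1 n \ {i}), y = permAct w lam}
        ⊆ {y : EuclideanSpace ℝ (Fin (n+1)) |
          ∃ w : Equiv.Perm (Fin (n+1)), y = permAct w lam} := by
      rintro z ⟨w, _, rfl⟩; exact ⟨w, rfl⟩
    have hmem1 : y ∈ permutohedron n lam := convexHull_mono hsub1 hy
    have hconv : Convex ℝ {y : EuclideanSpace ℝ (Fin (n+1)) | (∑ t, y t) = 0 ∧
        (inner ℝ y (varpiWt n i) : ℝ) = (inner ℝ lam (varpiWt n i) : ℝ)} := by
      have hEq : {y : EuclideanSpace ℝ (Fin (n+1)) | (∑ t, y t) = 0 ∧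
          (inner ℝ y (varpiWt n i) : ℝ) = (inner ℝ lam (varpiWt n i) : ℝ)}
          = {y : EuclideanSpace ℝ (Fin (n+1)) | (∑ t, y t) = 0} ∩
            {y : EuclideanSpace ℝ (Fin (n+1)) |
              (inner ℝ y (varpiWt n i) : ℝ) = (inner ℝ lam (varpiWt n i) : ℝ)} := rfl
      rw [hEq]
      exact Convex.inter (convex_hyperplane lin2 0) (convex_hyperplane lin1 _)
    have hmem2 : y ∈ {y : EuclideanSpace ℝ (Fin (n+1)) | (∑ t, y t) = 0 ∧
        (inner ℝ y (varpiWt n i) : ℝ) = (inner ℝ lam (varpiWt n i) : ℝ)} := by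
      apply convexHull_min _ hconv hy
      rintro z ⟨w, hw, rfl⟩
      refine ⟨by rw [PermAux.sum_permAct]; exact hsum0, ?_⟩
      rw [PermAux.inner_permAct_varpi i lam hsum0 w, hc]
      have hfilt : Finset.univ.filter (fun s : Fin (n+1) => ((w s : Fin (n+1)):ℕ) < i)
          = PermAux.TT n i := by
        ext s
        simp only [PermAux.TT, Finset.mem_filter, Finset.mem_univ, true_and]
        exact PermAux.WJ_preserve i hi1 hin w hw s
      rw [hfilt]
    exact ⟨hmem1, hmem2⟩

end
end
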